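/- Let z be a nonzero vector in R^n and 1 ≤ k ≤ n. Among all unit vectors x with at most k nonzero entries, the squared distance ‖x - z‖² is minimized by x* = T_k(z)/‖T_k(z)‖, where T_k(z) keeps the k entries of z with largest absolute values and sets all other entries to zero. -/

import Mathlib

/-- number of nonzero entries of a vector (the "ℓ₀-norm"). -/
noncomputable def l0 {n : ℕ} (x : Fin n → ℝ) : ℕ := (Finset.univ.filter fun i => x i ≠ 0).card

/-- Proposition 1: for a nonzero `z` and `1 ≤ k ≤ n`, among all unit vectors `x`
with at most `k` nonzero entries, `‖x - z‖²` is minimized by `T_k(z)/‖T_k(z)‖`,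
where `T_k(z)` keeps the `k` entries of `z` of largest absolute value (encoded
by an index set `S` of cardinality `k` dominating in absolute value) and zeros
out the rest. -/
theorem stmt0 {n : ℕ} (z : Fin n → ℝ) (hz : z ≠ 0) (k : ℕ) (hk1 : 1 ≤ k) (hkn : k ≤ n)
    (S : Finset (Fin n)) (hScard : S.card = k)
    (hStop : ∀ i ∈ S, ∀ j ∉ S, |z j| ≤ |z i|)
    (T : Fin n → ℝ) (hT : T = fun i => if i ∈ S then z i else 0)
    (xstar : Fin n → ℝ) (hx : xstar = fun i => T i / Real.sqrt (∑ j, T j ^ 2)) :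
    l0 xstar ≤ k ∧ (∑ i, xstar i ^ 2) = 1 ∧
      ∀ x : Fin n → ℝ, l0 x ≤ k → (∑ i, x i ^ 2) = 1 →
        (∑ i, (xstar i - z i) ^ 2) ≤ (∑ i, (x i - z i) ^ 2) := by
  subst hT hx
  set Q : ℝ := ∑ i ∈ S, z i ^ 2 with hQ
  have hSne : S.Nonempty := Finset.card_pos.mp (by omega)
  have hzi : ∃ i ∈ S, z i ≠ 0 := by
    by_contra h
    push_neg at h
    obtain ⟨j, hj⟩ := Function.ne_iff.mp hz
    by_cases hjS : j ∈ S
    · exact hj (h j hjS)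
    · obtain ⟨i, hi⟩ := hSne
      have h2 := hStop i hi j hjS
      rw [h i hi] at h2
      simp only [abs_zero] at h2
      exact hj (abs_nonpos_iff.mp h2)
  have hQpos : 0 < Q := by
    obtain ⟨i, hiS, hi⟩ := hzi
    exact Finset.sum_pos' (fun j _ => sq_nonneg _) ⟨i, hiS, by positivity⟩
  have hTQ : (∑ j, (if j ∈ S then z j else 0) ^ 2) = Q := by
    have h1 : ∀ j, (if j ∈ S then z j else 0) ^ 2 = if j ∈ S then z j ^ 2 else 0 :=
      fun j => by split <;> simp
    simp_rw [h1, Finset.sum_ite_mem, Finset.univ_inter]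
    exact hQ.symm
  set c : ℝ := Real.sqrt (∑ j, (if j ∈ S then z j else 0) ^ 2) with hcd
  have hc2 : c ^ 2 = Q := by rw [hcd, Real.sq_sqrt (by rw [hTQ]; linarith)]; exact hTQ
  have hcpos : 0 < c := by
    rw [hcd, hTQ]; exact Real.sqrt_pos.mpr hQpos
  have hsum1 : (∑ i, ((if i ∈ S then z i else 0) / c) ^ 2) = 1 := by
    simp_rw [div_pow, ← Finset.sum_div, hTQ, hc2]
    field_simp
  refine ⟨?_, hsum1, ?_⟩
  · rw [← hScard]
    simp only [l0]
    apply Finset.card_le_card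
    intro i hi
    simp only [Finset.mem_filter, Finset.mem_univ, true_and] at hi
    by_contra hiS
    simp [hiS] at hi
  · intro x hx0 hx1
    have expand : ∀ y : Fin n → ℝ,
        (∑ i, (y i - z i) ^ 2) = (∑ i, y i ^ 2) - 2 * (∑ i, y i * z i) + ∑ i, z i ^ 2 := by
      intro y
      have h1 : ∀ i, (y i - z i) ^ 2 = y i ^ 2 - 2 * (y i * z i) + z i ^ 2 := fun i => by ring
      simp_rw [h1, Finset.sum_add_distrib, Finset.sum_sub_distrib, ← Finset.mul_sum]
    have hipstar : (∑ i, ((if i ∈ S then z i else 0) / c) * z i) = c := by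
      have h1 : ∀ i, ((if i ∈ S then z i else 0) / c) * z i
          = (if i ∈ S then z i ^ 2 else 0) / c := fun i => by split <;> ring
      simp_rw [h1, ← Finset.sum_div, Finset.sum_ite_mem, Finset.univ_inter, ← hQ, ← hc2]
      field_simp
    -- inner product bound for x
    set A : Finset (Fin n) := Finset.univ.filter (fun i => x i ≠ 0) with hA
    have hxA : (∑ i ∈ A, x i ^ 2) = 1 := by
      rw [← hx1]
      exact Finset.sum_filter_of_ne (fun i _ h hxi => h (by rw [hxi]; ring))
    have hxzA : (∑ i, x i * z i) = ∑ i ∈ A, x i * z i :=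
      (Finset.sum_filter_of_ne (fun i _ h => left_ne_zero_of_mul h)).symm
    have hAcard : A.card ≤ S.card := by
      rw [hScard, hA]
      simpa [l0] using hx0
    -- ∑_{A} z² ≤ Q
    obtain ⟨i0, hi0S, hi0min⟩ := S.exists_min_image (fun i => z i ^ 2) hSne
    have hsdcard : (A \ S).card ≤ (S \ A).card := by
      have h1 := Finset.card_sdiff_add_card_inter A S
      have h2 := Finset.card_sdiff_add_card_inter S A
      rw [Finset.inter_comm] at h2
      omega
    have hADS : (∑ i ∈ A \ S, z i ^ 2) ≤ ∑ i ∈ S \ A, z i ^ 2 := by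
      calc (∑ i ∈ A \ S, z i ^ 2) ≤ (A \ S).card • (z i0 ^ 2) := by
            apply Finset.sum_le_card_nsmul
            intro j hj
            have hjS : j ∉ S := (Finset.mem_sdiff.mp hj).2
            have := hStop i0 hi0S j hjS
            calc z j ^ 2 = |z j| ^ 2 := (sq_abs _).symm
              _ ≤ |z i0| ^ 2 := by gcongr <;> positivity
              _ = z i0 ^ 2 := sq_abs _
        _ ≤ (S \ A).card • (z i0 ^ 2) := by
            apply nsmul_le_nsmul_left (sq_nonneg _) hsdcard
        _ ≤ ∑ i ∈ S \ A, z i ^ 2 := by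
            apply Finset.card_nsmul_le_sum
            intro j hj
            exact hi0min j (Finset.mem_sdiff.mp hj).1
    have hAz : (∑ i ∈ A, z i ^ 2) ≤ Q := by
      rw [hQ]
      have h1 : (∑ i ∈ A, z i ^ 2) = (∑ i ∈ A ∩ S, z i ^ 2) + ∑ i ∈ A \ S, z i ^ 2 :=
        (Finset.sum_inter_add_sum_sdiff A S _).symm
      have h2 : Q = (∑ i ∈ S ∩ A, z i ^ 2) + ∑ i ∈ S \ A, z i ^ 2 :=
        (Finset.sum_inter_add_sum_sdiff S A _).symm
      rw [Finset.inter_comm] at h2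
      rw [← hQ, h1, h2]
      linarith
    have hCS : (∑ i ∈ A, x i * z i) ^ 2 ≤ (∑ i ∈ A, x i ^ 2) * ∑ i ∈ A, z i ^ 2 :=
      Finset.sum_mul_sq_le_sq_mul_sq A x z
    have hip : (∑ i, x i * z i) ≤ c := by
      rw [hxzA]
      nlinarith [hCS, hxA, hAz, hc2, hcpos]
    rw [expand, expand, hsum1, hx1, hipstar]
    linarith
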